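/- For every odd integer n ≥ 3 and every integer λ ≥ 1, the harmonious total chromatic number of the complete multigraph λK_n satisfies h_t(λK_n) ≥ (λ−1)n + (3n+1)/2. -/

import Mathlib

/-- A harmonious total colouring of the complete multigraph `λK_n` with `k` colours.
Vertices are `Fin n`; the `lam` parallel edges joining a pair `e` of distinct vertices
are `(e, i)` for `i : Fin lam`.  The colouring is proper on vertices (all vertices are
pairwise adjacent), on edges sharing an endpoint (in particular parallel edges), and on
vertex-edge incidences; moreover the unordered pairs `{cv v, ce e i}` over incident
vertex-edge pairs are pairwise distinct. -/
def IsHarmoniousTotalColoringM (n lam k : ℕ)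
    (cv : Fin n → Fin k) (ce : Sym2 (Fin n) → Fin lam → Fin k) : Prop :=
  (∀ u v : Fin n, u ≠ v → cv u ≠ cv v) ∧
  (∀ (e f : Sym2 (Fin n)) (i j : Fin lam), ¬ e.IsDiag → ¬ f.IsDiag → (e, i) ≠ (f, j) →
    (∃ v, v ∈ e ∧ v ∈ f) → ce e i ≠ ce f j) ∧
  (∀ (v : Fin n) (e : Sym2 (Fin n)) (i : Fin lam), ¬ e.IsDiag → v ∈ e → cv v ≠ ce e i) ∧
  (∀ (v : Fin n) (e : Sym2 (Fin n)) (i : Fin lam) (w : Fin n) (f : Sym2 (Fin n)) (j : Fin lam),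
    ¬ e.IsDiag → ¬ f.IsDiag → v ∈ e → w ∈ f →
    s(cv v, ce e i) = s(cv w, ce f j) → v = w ∧ e = f ∧ i = j)

/-- The harmonious total chromatic number of the complete multigraph `λK_n`. -/
noncomputable def harmoniousTotalChromaticNumberM (n lam : ℕ) : ℕ :=
  sInf {k | ∃ cv ce, IsHarmoniousTotalColoringM n lam k cv ce}

/-- The set of admissible colour counts is nonempty: colour everything differently. -/
lemma htcm_set_nonempty (n lam : ℕ) :
    ∃ k cv ce, IsHarmoniousTotalColoringM n lam k cv ce := by
  classical
  refine ⟨Fintype.card (Fin n ⊕ Sym2 (Fin n) × Fin lam), ?_⟩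
  set F := Fintype.equivFin (Fin n ⊕ Sym2 (Fin n) × Fin lam) with hF
  refine ⟨fun v => F (Sum.inl v), fun e i => F (Sum.inr (e, i)), ?_, ?_, ?_, ?_⟩
  · intro u v huv h
    exact huv (by simpa using F.injective h)
  · intro e f i j _ _ hne _ h
    apply hne
    have h2 := F.injective h
    simpa [Prod.ext_iff] using h2
  · intro v e i _ _ h
    have h2 := F.injective h
    simp at h2
  · intro v e i w f j _ _ _ _ h
    rw [Sym2.eq_iff] at h
    rcases h with ⟨hl, hr⟩ | ⟨hl, hr⟩
    · have h1 := F.injective hl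
      have h2 := F.injective hr
      simp only [Sum.inl.injEq] at h1
      simp only [Sum.inr.injEq, Prod.mk.injEq] at h2
      exact ⟨h1, h2.1, h2.2⟩
    · exact absurd (F.injective hl) (by simp)

/-- An edge of a non-diagonal `Sym2` has exactly two endpoints. -/
lemma htcm_two_endpoints {n : ℕ} (e : Sym2 (Fin n)) (he : ¬ e.IsDiag) :
    (Finset.univ.filter (fun v => v ∈ e)).card = 2 := by
  classical
  induction e using Sym2.ind with
  | _ a b =>
    have hab : a ≠ b := by simpa [Sym2.mk_isDiag_iff] using he
    have hset : Finset.univ.filter (fun v => v ∈ s(a, b)) = {a, b} := by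
      ext v
      simp [Sym2.mem_iff]
    rw [hset, Finset.card_pair hab]

/-- Main counting lemma: any admissible `k` satisfies the bound. -/
lemma htcm_key (n lam k : ℕ) (hlam : 1 ≤ lam) (hn : 3 ≤ n) (hno : Odd n)
    (cv : Fin n → Fin k) (ce : Sym2 (Fin n) → Fin lam → Fin k)
    (H : IsHarmoniousTotalColoringM n lam k cv ce) :
    (lam - 1) * n + (3 * n + 1) / 2 ≤ k := by
  classical
  obtain ⟨h1, h2, h3, h4⟩ := H
  have hcv_inj : Function.Injective cv := by
    intro u v h
    by_contra hne
    exact h1 u v hne h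
  have hn0 : (0 : ℕ) < n := by omega
  haveI : Nonempty (Fin n) := ⟨⟨0, hn0⟩⟩
  set Inc : Finset (Fin n × Sym2 (Fin n) × Fin lam) :=
    Finset.univ.filter (fun p => ¬ p.2.1.IsDiag ∧ p.1 ∈ p.2.1) with hIncDef
  have hmemInc : ∀ p : Fin n × Sym2 (Fin n) × Fin lam,
      p ∈ Inc ↔ ¬ p.2.1.IsDiag ∧ p.1 ∈ p.2.1 := by
    intro p; simp [hIncDef]
  set VC : Finset (Fin k) := Finset.univ.image cv with hVCdef
  have hVC : VC.card = n := by
    rw [hVCdef, Finset.card_image_of_injective _ hcv_inj, Finset.card_univ, Fintype.card_fin]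
  have hkn : n ≤ k := by
    have h := Finset.card_le_univ VC
    rw [hVC] at h
    simpa using h
  -- Lower bound on the number of incidences
  have hIncLB : lam * (n * (n - 1)) ≤ Inc.card := by
    have hinj : ((Finset.univ : Finset (Fin n)).offDiag ×ˢ (Finset.univ : Finset (Fin lam))).card
        ≤ Inc.card := by
      apply Finset.card_le_card_of_injOn (fun q => (q.1.1, s(q.1.1, q.1.2), q.2))
      · rintro ⟨⟨u, w⟩, i⟩ hq
        simp only [Finset.mem_coe, Finset.mem_product, Finset.mem_offDiag] at hq
        obtain ⟨⟨-, -, huw⟩, -⟩ := hq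
        rw [Finset.mem_coe, hmemInc]
        exact ⟨by simp [Sym2.mk_isDiag_iff, huw], by simp⟩
      · rintro ⟨⟨u, w⟩, i⟩ hq ⟨⟨u', w'⟩, i'⟩ hq' heq
        simp only [Finset.coe_product, Set.mem_prod, Finset.mem_coe, Finset.mem_offDiag,
          Finset.mem_univ, true_and] at hq hq'
        obtain ⟨rfl, h2', rfl⟩ : u = u' ∧ s(u, w) = s(u', w') ∧ i = i' := by
          simpa [Prod.ext_iff] using heq
        rcases Sym2.eq_iff.mp h2' with ⟨-, rfl⟩ | ⟨hx, hy⟩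
        · rfl
        · exact absurd hy.symm hq.1
    have hcardprod :
        ((Finset.univ : Finset (Fin n)).offDiag ×ˢ (Finset.univ : Finset (Fin lam))).card
          = (n * n - n) * lam := by
      rw [Finset.card_product, Finset.offDiag_card, Finset.card_univ, Finset.card_univ,
        Fintype.card_fin, Fintype.card_fin]
    have hswap : lam * (n * (n - 1)) = (n * n - n) * lam := by
      rw [mul_comm lam, mul_comm n (n - 1), Nat.sub_one_mul]
    rw [hswap, ← hcardprod]
    exact hinj
  -- Each colour class of edge-incidences is even and of size ≤ n, hence ≤ n - 1
  have hIc_le : ∀ c : Fin k, (Inc.filter (fun p => ce p.2.1 p.2.2 = c)).card ≤ n - 1 := by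
    intro c
    set Ic := Inc.filter (fun p => ce p.2.1 p.2.2 = c) with hIcDef
    have hle : Ic.card ≤ n := by
      have h := Finset.card_le_card_of_injOn (s := Ic) (t := (Finset.univ : Finset (Fin n)))
        (fun p => p.1) (fun p _ => Finset.mem_univ _) ?inj
      · rw [Finset.card_univ, Fintype.card_fin] at h
        exact h
      case inj =>
        intro p hp q hq hpq'
        have hpq : p.1 = q.1 := hpq'
        rw [Finset.mem_coe, hIcDef, Finset.mem_filter] at hp hq
        have hpI := (hmemInc p).mp hp.1
        have hqI := (hmemInc q).mp hq.1
        obtain ⟨h1', h2', h3'⟩ := h4 p.1 p.2.1 p.2.2 q.1 q.2.1 q.2.2 hpI.1 hqI.1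
          hpI.2 hqI.2 (by rw [hp.2, hq.2, hpq])
        exact Prod.ext_iff.mpr ⟨hpq, Prod.ext_iff.mpr ⟨h2', h3'⟩⟩
    have heven : Even Ic.card := by
      set Ec : Finset (Sym2 (Fin n) × Fin lam) :=
        Finset.univ.filter (fun q => ¬ q.1.IsDiag ∧ ce q.1 q.2 = c) with hEcDef
      have hmap : ∀ p ∈ Ic, p.2 ∈ Ec := by
        rintro ⟨pv, pe, pi⟩ hp
        simp only [hIcDef, Finset.mem_filter] at hp
        rw [hmemInc] at hp
        simp only [hEcDef, Finset.mem_filter, Finset.mem_univ, true_and]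
        exact ⟨hp.1.1, hp.2⟩
      rw [Finset.card_eq_sum_card_fiberwise hmap]
      have hfib : ∀ q ∈ Ec, (Ic.filter (fun p => p.2 = q)).card = 2 := by
        intro q hq
        simp only [hEcDef, Finset.mem_filter, Finset.mem_univ, true_and] at hq
        have hbij : (Ic.filter (fun p => p.2 = q)).card
            = (Finset.univ.filter (fun v => v ∈ q.1)).card := by
          refine Finset.card_bij' (fun p _ => p.1) (fun v _ => (v, q)) ?_ ?_ ?_ ?_
          · intro p hp
            rw [Finset.mem_filter, hIcDef, Finset.mem_filter] at hp
            have hpI := (hmemInc p).mp hp.1.1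
            simp only [Finset.mem_filter, Finset.mem_univ, true_and]
            rw [← hp.2]
            exact hpI.2
          · intro v hv
            simp only [Finset.mem_filter, Finset.mem_univ, true_and] at hv
            rw [Finset.mem_filter, hIcDef, Finset.mem_filter]
            exact ⟨⟨(hmemInc _).mpr ⟨hq.1, hv⟩, hq.2⟩, rfl⟩
          · intro p hp
            rw [Finset.mem_filter] at hp
            exact Prod.ext_iff.mpr ⟨rfl, hp.2.symm⟩
          · intro v hv
            rfl
        rw [hbij]
        exact htcm_two_endpoints q.1 hq.1
      rw [Finset.sum_congr rfl hfib, Finset.sum_const, smul_eq_mul]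
      exact ⟨Ec.card, by ring⟩
    obtain ⟨r, hr⟩ := heven
    obtain ⟨m, hm⟩ := hno
    omega
  -- Per-vertex inequality
  have hpervertex : ∀ v : Fin n,
      (Inc.filter (fun p => ce p.2.1 p.2.2 = cv v)).card
        + ((Inc.filter (fun p => ce p.2.1 p.2.2 ∈ VC)).filter (fun p => p.1 = v)).card
        ≤ n - 1 := by
    intro v
    set S := Inc.filter (fun p => ce p.2.1 p.2.2 = cv v) with hSdef
    set T := (Inc.filter (fun p => ce p.2.1 p.2.2 ∈ VC)).filter (fun p => p.1 = v) with hTdef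
    have hSmem : ∀ r ∈ S, (¬ r.2.1.IsDiag ∧ r.1 ∈ r.2.1) ∧ ce r.2.1 r.2.2 = cv v := by
      intro r hr
      simp only [hSdef, Finset.mem_filter] at hr
      rw [hmemInc] at hr
      exact hr
    have hTmem : ∀ r ∈ T, (¬ r.2.1.IsDiag ∧ r.1 ∈ r.2.1) ∧ r.1 = v ∧
        ce r.2.1 r.2.2 ∈ VC := by
      intro r hr
      simp only [hTdef, Finset.mem_filter] at hr
      rw [hmemInc] at hr
      exact ⟨hr.1.1, hr.2, hr.1.2⟩
    have hSv : ∀ r ∈ S, r.1 ≠ v := by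
      intro r hr hrv
      obtain ⟨⟨hd, hm'⟩, hc⟩ := hSmem r hr
      exact h3 r.1 r.2.1 r.2.2 hd hm' (by rw [hrv, ← hc])
    have hTcol : ∀ r ∈ T, ce r.2.1 r.2.2 ≠ cv v := by
      intro r hr hc
      obtain ⟨⟨hd, hm'⟩, hrv, -⟩ := hTmem r hr
      exact h3 v r.2.1 r.2.2 hd (by rw [← hrv]; exact hm') hc.symm
    have hdisj : Disjoint S T := by
      rw [Finset.disjoint_left]
      intro r hrS hrT
      exact hTcol r hrT (hSmem r hrS).2
    have hinvfun : ∀ r ∈ T, cv (Function.invFun cv (ce r.2.1 r.2.2)) = ce r.2.1 r.2.2 := by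
      intro r hr
      obtain ⟨-, -, hcVC⟩ := hTmem r hr
      rw [hVCdef, Finset.mem_image] at hcVC
      obtain ⟨w, -, hw⟩ := hcVC
      exact Function.invFun_eq ⟨w, hw⟩
    rw [← Finset.card_union_of_disjoint hdisj]
    have hcard : ((Finset.univ : Finset (Fin n)).erase v).card = n - 1 := by
      rw [Finset.card_erase_of_mem (Finset.mem_univ v), Finset.card_univ, Fintype.card_fin]
    rw [← hcard]
    apply Finset.card_le_card_of_injOn
      (fun p => if ce p.2.1 p.2.2 = cv v then p.1 else Function.invFun cv (ce p.2.1 p.2.2))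
    · -- maps into univ.erase v
      intro p hp
      rw [Finset.mem_coe, Finset.mem_union] at hp
      rw [Finset.mem_coe, Finset.mem_erase]
      refine ⟨?_, Finset.mem_univ _⟩
      show (if ce p.2.1 p.2.2 = cv v then p.1 else Function.invFun cv (ce p.2.1 p.2.2)) ≠ v
      by_cases hc : ce p.2.1 p.2.2 = cv v
      · rw [if_pos hc]
        have hpS : p ∈ S := by
          rcases hp with hp | hp
          · exact hp
          · exact absurd hc (hTcol p hp)
        exact hSv p hpS
      · rw [if_neg hc]
        have hpT : p ∈ T := by
          rcases hp with hp | hp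
          · exact absurd (hSmem p hp).2 hc
          · exact hp
        intro hEq
        have hfw := hinvfun p hpT
        rw [hEq] at hfw
        exact hc hfw.symm
    · -- injective on S ∪ T
      intro p hp q hq heq'
      have heq : (if ce p.2.1 p.2.2 = cv v then p.1 else Function.invFun cv (ce p.2.1 p.2.2))
          = (if ce q.2.1 q.2.2 = cv v then q.1 else Function.invFun cv (ce q.2.1 q.2.2)) := heq'
      rw [Finset.coe_union, Set.mem_union, Finset.mem_coe, Finset.mem_coe] at hp hq
      have hmemP : p ∈ S ∪ T := Finset.mem_union.mpr hp
      have hmemQ : q ∈ S ∪ T := Finset.mem_union.mpr hq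
      have hclassP : (ce p.2.1 p.2.2 = cv v → p ∈ S) ∧ (ce p.2.1 p.2.2 ≠ cv v → p ∈ T) := by
        constructor
        · intro hc; rcases hp with hp | hp
          · exact hp
          · exact absurd hc (hTcol p hp)
        · intro hc; rcases hp with hp | hp
          · exact absurd (hSmem p hp).2 hc
          · exact hp
      have hclassQ : (ce q.2.1 q.2.2 = cv v → q ∈ S) ∧ (ce q.2.1 q.2.2 ≠ cv v → q ∈ T) := by
        constructor
        · intro hc; rcases hq with hq | hq
          · exact hq
          · exact absurd hc (hTcol q hq)
        · intro hc; rcases hq with hq | hq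
          · exact absurd (hSmem q hq).2 hc
          · exact hq
      -- basic incidence data
      have hpInc : ¬ p.2.1.IsDiag ∧ p.1 ∈ p.2.1 := by
        rcases hp with hp | hp
        · exact (hSmem p hp).1
        · exact (hTmem p hp).1
      have hqInc : ¬ q.2.1.IsDiag ∧ q.1 ∈ q.2.1 := by
        rcases hq with hq | hq
        · exact (hSmem q hq).1
        · exact (hTmem q hq).1
      by_cases hcp : ce p.2.1 p.2.2 = cv v <;> by_cases hcq : ce q.2.1 q.2.2 = cv v
      · -- both have edge colour cv v
        rw [if_pos hcp, if_pos hcq] at heq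
        obtain ⟨h1', h2', h3'⟩ := h4 p.1 p.2.1 p.2.2 q.1 q.2.1 q.2.2 hpInc.1 hqInc.1
          hpInc.2 hqInc.2 (by rw [hcp, hcq, heq])
        exact Prod.ext_iff.mpr ⟨h1', Prod.ext_iff.mpr ⟨h2', h3'⟩⟩
      · -- p side colour cv v, q in T
        exfalso
        rw [if_pos hcp, if_neg hcq] at heq
        have hqT := hclassQ.2 hcq
        have hq1 : q.1 = v := (hTmem q hqT).2.1
        have hfw := hinvfun q hqT
        rw [← heq] at hfw
        have hpair : s(cv p.1, ce p.2.1 p.2.2) = s(cv q.1, ce q.2.1 q.2.2) := by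
          rw [hcp, hq1, ← hfw]
          exact Sym2.eq_swap
        obtain ⟨h1', -, -⟩ := h4 p.1 p.2.1 p.2.2 q.1 q.2.1 q.2.2 hpInc.1 hqInc.1
          hpInc.2 hqInc.2 hpair
        have hpS := hclassP.1 hcp
        exact hSv p hpS (h1'.trans hq1)
      · -- q side colour cv v, p in T
        exfalso
        rw [if_neg hcp, if_pos hcq] at heq
        have hpT := hclassP.2 hcp
        have hp1 : p.1 = v := (hTmem p hpT).2.1
        have hfw := hinvfun p hpT
        rw [heq] at hfw
        have hpair : s(cv p.1, ce p.2.1 p.2.2) = s(cv q.1, ce q.2.1 q.2.2) := by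
          rw [hcq, hp1, ← hfw]
          exact Sym2.eq_swap
        obtain ⟨h1', -, -⟩ := h4 p.1 p.2.1 p.2.2 q.1 q.2.1 q.2.2 hpInc.1 hqInc.1
          hpInc.2 hqInc.2 hpair
        have hqS := hclassQ.1 hcq
        exact hSv q hqS (h1'.symm.trans hp1)
      · -- both in T
        rw [if_neg hcp, if_neg hcq] at heq
        have hpT := hclassP.2 hcp
        have hqT := hclassQ.2 hcq
        have hp1 : p.1 = v := (hTmem p hpT).2.1
        have hq1 : q.1 = v := (hTmem q hqT).2.1
        have hceq : ce p.2.1 p.2.2 = ce q.2.1 q.2.2 := by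
          rw [← hinvfun p hpT, ← hinvfun q hqT, heq]
        obtain ⟨h1', h2', h3'⟩ := h4 p.1 p.2.1 p.2.2 q.1 q.2.1 q.2.2 hpInc.1 hqInc.1
          hpInc.2 hqInc.2 (by rw [hceq, hp1, hq1])
        exact Prod.ext_iff.mpr ⟨h1', Prod.ext_iff.mpr ⟨h2', h3'⟩⟩
  -- Global summation
  have hsum_all : Inc.card
      = ∑ c : Fin k, (Inc.filter (fun p => ce p.2.1 p.2.2 = c)).card :=
    Finset.card_eq_sum_card_fiberwise (fun p _ => Finset.mem_univ _)
  set A := ∑ c ∈ VC, (Inc.filter (fun p => ce p.2.1 p.2.2 = c)).card with hAdef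
  set B := ∑ c ∈ VCᶜ, (Inc.filter (fun p => ce p.2.1 p.2.2 = c)).card with hBdef
  have hsplit : Inc.card = A + B := by
    rw [hsum_all, hAdef, hBdef, Finset.sum_add_sum_compl]
  -- A equals the count of incidences whose edge colour is a vertex colour
  set IncVC := Inc.filter (fun p => ce p.2.1 p.2.2 ∈ VC) with hIncVCdef
  have hA_eq : A = IncVC.card := by
    have hmap : ∀ p ∈ IncVC, ce p.2.1 p.2.2 ∈ VC := by
      intro p hp
      simp only [hIncVCdef, Finset.mem_filter] at hp
      exact hp.2
    rw [hAdef, Finset.card_eq_sum_card_fiberwise hmap]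
    apply Finset.sum_congr rfl
    intro c hc
    congr 1
    ext p
    simp only [hIncVCdef, Finset.mem_filter]
    constructor
    · rintro ⟨hp, hcp⟩
      exact ⟨⟨hp, hcp ▸ hc⟩, hcp⟩
    · rintro ⟨⟨hp, -⟩, hcp⟩
      exact ⟨hp, hcp⟩
  have hA_vert : A = ∑ v : Fin n, (Inc.filter (fun p => ce p.2.1 p.2.2 = cv v)).card := by
    rw [hAdef, hVCdef]
    exact Finset.sum_image (fun x _ y _ h => hcv_inj h)
  have hT_sum : IncVC.card = ∑ v : Fin n, (IncVC.filter (fun p => p.1 = v)).card :=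
    Finset.card_eq_sum_card_fiberwise (fun p _ => Finset.mem_univ _)
  have h2A : 2 * A ≤ n * (n - 1) := by
    have hAA : 2 * A = ∑ v : Fin n,
        ((Inc.filter (fun p => ce p.2.1 p.2.2 = cv v)).card
          + (IncVC.filter (fun p => p.1 = v)).card) := by
      rw [Finset.sum_add_distrib, ← hA_vert, ← hT_sum, ← hA_eq]
      ring
    rw [hAA]
    calc ∑ v : Fin n, ((Inc.filter (fun p => ce p.2.1 p.2.2 = cv v)).card
          + (IncVC.filter (fun p => p.1 = v)).card)
        ≤ ∑ _v : Fin n, (n - 1) := Finset.sum_le_sum (fun v _ => hpervertex v)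
      _ = n * (n - 1) := by
          rw [Finset.sum_const, Finset.card_univ, Fintype.card_fin, smul_eq_mul]
  have hB_le : B ≤ (k - n) * (n - 1) := by
    have := Finset.sum_le_card_nsmul VCᶜ
      (fun c => (Inc.filter (fun p => ce p.2.1 p.2.2 = c)).card) (n - 1)
      (fun c _ => hIc_le c)
    rw [Finset.card_compl, Fintype.card_fin, hVC, smul_eq_mul] at this
    exact this
  -- Combine
  have hfinal : 2 * (lam * n) ≤ n + 2 * (k - n) := by
    have hchain : (2 * lam * n) * (n - 1) ≤ (n + 2 * (k - n)) * (n - 1) := by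
      calc (2 * lam * n) * (n - 1) = 2 * (lam * (n * (n - 1))) := by ring
        _ ≤ 2 * Inc.card := by omega
        _ = 2 * A + 2 * B := by rw [hsplit]; ring
        _ ≤ n * (n - 1) + 2 * ((k - n) * (n - 1)) := by omega
        _ = (n + 2 * (k - n)) * (n - 1) := by ring
    have h := Nat.le_of_mul_le_mul_right hchain (by omega : 0 < n - 1)
    rwa [mul_assoc] at h
  have hnL : n ≤ lam * n := Nat.le_mul_of_pos_left n hlam
  obtain ⟨m, hm⟩ := hno
  have hsub : (lam - 1) * n = lam * n - n := Nat.sub_one_mul lam n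
  rw [hsub]
  have hgen : ∀ L : ℕ, n ≤ L → 2 * L ≤ n + 2 * (k - n) → L - n + (3 * n + 1) / 2 ≤ k := by
    intro L hL hL2
    omega
  exact hgen (lam * n) hnL hfinal

/-- For every odd `n ≥ 3` and every `λ ≥ 1`,
`h_t(λK_n) ≥ (λ - 1)n + (3n + 1)/2`. -/
theorem ht_multigraph_lower_odd (n lam : ℕ) (hlam : 1 ≤ lam) (hn : 3 ≤ n) (hno : Odd n) :
    (lam - 1) * n + (3 * n + 1) / 2 ≤ harmoniousTotalChromaticNumberM n lam := by
  have hne : {k | ∃ cv ce, IsHarmoniousTotalColoringM n lam k cv ce}.Nonempty := by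
    obtain ⟨k, cv, ce, h⟩ := htcm_set_nonempty n lam
    exact ⟨k, cv, ce, h⟩
  refine le_csInf hne ?_
  rintro k ⟨cv, ce, H⟩
  exact htcm_key n lam k hlam hn hno cv ce H
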